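/- Let E, E' be finite-dimensional vector spaces over a field k, let v, v' be prevaluations on E, E', and suppose the frame L = {L₁,…,L_r} is adapted to v and the frame L' = {L'₁,…,L'_s} is adapted to v'. Then the frame L ⊗ L' = { L_i ⊗ L'_j : 1 ≤ i ≤ r, 1 ≤ j ≤ s } in E ⊗ E' is adapted to the tensor product prevaluation v ⊗ v', and v ⊗ v' is the unique prevaluation adapted to L ⊗ L' satisfying (v ⊗ v')(e_i ⊗ e'_j) = v(e_i) + v'(e'_j) for all nonzero e_i ∈ L_i and e'_j ∈ L'_j. -/

import Mathlib

open scoped TensorProduct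

/-- A prevaluation on a vector space `E` over a field `k` (value at `0` irrelevant). -/
def IsPrevaluation (k : Type*) [Field k] {E : Type*} [AddCommGroup E] [Module k E]
    (v : E → ℚ) : Prop :=
  (∀ (c : k) (e : E), c ≠ 0 → e ≠ 0 → v (c • e) = v e) ∧
  (∀ e₁ e₂ : E, e₁ ≠ 0 → e₂ ≠ 0 → e₁ + e₂ ≠ 0 → min (v e₁) (v e₂) ≤ v (e₁ + e₂))

/-- A frame in `E`: a finite collection of one-dimensional subspaces whose
(internal) direct sum is `E`. -/
def IsFrame {k E : Type*} [Field k] [AddCommGroup E] [Module k E]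
    {ι : Type*} [Fintype ι] [DecidableEq ι] (L : ι → Submodule k E) : Prop :=
  (∀ i, Module.finrank k (L i) = 1) ∧ DirectSum.IsInternal L

/-- A frame `L` is adapted to `v` if every subspace `F_{v ≥ a}` is the sum of
some subset of the members of `L`. -/
def AdaptedFrame {k E : Type*} [Field k] [AddCommGroup E] [Module k E]
    {ι : Type*} (v : E → ℚ) (L : ι → Submodule k E) : Prop :=
  ∀ a : ℚ, ∃ s : Finset ι, {e : E | e = 0 ∨ a ≤ v e} = ↑(∑ i ∈ s, L i)

/-- For `w ∈ E ⊗ E'`, the set of numbers `min_i (v (e i) + v' (e' i))` over all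
representations `w = ∑ i, e i ⊗ e' i` as a finite sum of nonzero pure tensors. -/
def tensorVals (k : Type*) [Field k] {E E' : Type*} [AddCommGroup E] [Module k E]
    [AddCommGroup E'] [Module k E'] (v : E → ℚ) (v' : E' → ℚ) (w : E ⊗[k] E') : Set ℚ :=
  {q : ℚ | ∃ (m : ℕ) (hm : 0 < m) (e : Fin m → E) (e' : Fin m → E'),
      (∀ i, e i ≠ 0) ∧ (∀ i, e' i ≠ 0) ∧ w = ∑ i, e i ⊗ₜ[k] e' i ∧
      q = Finset.univ.inf' ⟨⟨0, hm⟩, Finset.mem_univ _⟩ (fun i => v (e i) + v' (e' i))}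

/-- The tensor product frame in `E ⊗ E'`, with member `(i, j)` the image
`L i ⊗ L' j` of `L i` and `L' j` in `E ⊗ E'`. -/
def tensorFrame {k E E' : Type*} [Field k] [AddCommGroup E] [Module k E]
    [AddCommGroup E'] [Module k E'] {ι ι' : Type*}
    (L : ι → Submodule k E) (L' : ι' → Submodule k E') (p : ι × ι') :
    Submodule k (E ⊗[k] E') :=
  Submodule.span k {w : E ⊗[k] E' | ∃ x ∈ L p.1, ∃ y ∈ L' p.2, w = x ⊗ₜ[k] y}


section Helpers

variable {k E ι : Type*} [Field k] [AddCommGroup E] [Module k E]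

private lemma sum_span_singleton_eq (b : ι → E) (s : Finset ι) :
    (∑ i ∈ s, Submodule.span k {b i}) = Submodule.span k (b '' ↑s) := by
  classical
  induction s using Finset.induction_on with
  | empty => simp
  | insert _ _ h ih =>
    rw [Finset.sum_insert h, ih, Finset.coe_insert, Set.image_insert_eq,
      Submodule.span_insert, Submodule.add_eq_sup]

private lemma mem_sum_span_iff (b : Module.Basis ι k E) (s : Finset ι) (w : E) :
    w ∈ (∑ i ∈ s, Submodule.span k {b i}) ↔ ∀ i, b.repr w i ≠ 0 → i ∈ s := by
  rw [sum_span_singleton_eq, b.mem_span_image]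
  constructor
  · intro h i hi
    exact h (Finsupp.mem_support_iff.mpr hi)
  · intro h i hi
    exact h i (Finsupp.mem_support_iff.mp hi)

private lemma adapted_le (b : Module.Basis ι k E) {v : E → ℚ}
    (hva : AdaptedFrame v (fun i => Submodule.span k {b i})) {w : E} (hw : w ≠ 0)
    {i : ι} (hi : b.repr w i ≠ 0) : v w ≤ v (b i) := by
  classical
  obtain ⟨s, hs⟩ := hva (v w)
  have hw2 : w ∈ {e : E | e = 0 ∨ v w ≤ v e} := Or.inr le_rfl
  rw [hs] at hw2
  have his : i ∈ s := (mem_sum_span_iff b s w).mp hw2 i hi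
  have hbi : b i ∈ (↑(∑ j ∈ s, Submodule.span k {b j}) : Set E) := by
    refine (mem_sum_span_iff b s (b i)).mpr (fun j hj => ?_)
    rw [b.repr_self, Finsupp.single_apply] at hj
    by_cases hij : i = j
    · exact hij ▸ his
    · simp [hij] at hj
  rw [← hs] at hbi
  rcases hbi with h0 | hle
  · exact absurd h0 (b.ne_zero i)
  · exact hle

private lemma adapted_eq_inf (b : Module.Basis ι k E) {v : E → ℚ}
    (hva : AdaptedFrame v (fun i => Submodule.span k {b i})) {w : E} (hw : w ≠ 0)
    (hne : (b.repr w).support.Nonempty) :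
    v w = (b.repr w).support.inf' hne (fun i => v (b i)) := by
  apply le_antisymm
  · exact Finset.le_inf' _ _ fun i hi => adapted_le b hva hw (Finsupp.mem_support_iff.mp hi)
  · set a := (b.repr w).support.inf' hne (fun i => v (b i)) with ha
    obtain ⟨s, hs⟩ := hva a
    have hsub : ∀ i ∈ (b.repr w).support, i ∈ s := by
      intro i hi
      have hmem : b i ∈ {e : E | e = 0 ∨ a ≤ v e} := Or.inr (Finset.inf'_le _ hi)
      rw [hs] at hmem
      exact (mem_sum_span_iff b s (b i)).mp hmem i (by simp [b.repr_self])
    have hwmem : w ∈ {e : E | e = 0 ∨ a ≤ v e} := by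
      rw [hs]
      exact (mem_sum_span_iff b s w).mpr
        (fun i hi => hsub i (Finsupp.mem_support_iff.mpr hi))
    rcases hwmem with h0 | hle
    · exact absurd h0 hw
    · exact hle

private lemma adapted_of_inf [Fintype ι] (b : Module.Basis ι k E) (u : ι → ℚ) (T : E → ℚ)
    (hT : ∀ (w : E) (hne : (b.repr w).support.Nonempty),
      T w = (b.repr w).support.inf' hne u) :
    AdaptedFrame T (fun i => Submodule.span k {b i}) := by
  classical
  intro a
  refine ⟨Finset.univ.filter (fun i => a ≤ u i), ?_⟩
  ext w
  simp only [Set.mem_setOf_eq, SetLike.mem_coe, mem_sum_span_iff, Finset.mem_filter,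
    Finset.mem_univ, true_and]
  by_cases hw : w = 0
  · subst hw; simp
  · have hne : (b.repr w).support.Nonempty := Finsupp.support_nonempty_iff.mpr
      (fun h => hw (by simpa using congrArg b.repr.symm h))
    constructor
    · rintro (rfl | hle)
      · exact absurd rfl hw
      · intro i hi
        rw [hT w hne] at hle
        exact le_trans hle (Finset.inf'_le _ (Finsupp.mem_support_iff.mpr hi))
    · intro h
      right
      rw [hT w hne]
      exact Finset.le_inf' _ _ fun i hi => h i (Finsupp.mem_support_iff.mp hi)

private lemma isFrame_of_basis [Fintype ι] [DecidableEq ι] (b : Module.Basis ι k E) :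
    IsFrame (fun i => Submodule.span k {b i}) := by
  constructor
  · intro i
    exact finrank_span_singleton (b.ne_zero i)
  · rw [DirectSum.isInternal_submodule_iff_iSupIndep_and_iSup_eq_top]
    refine ⟨b.linearIndependent.iSupIndep_span_singleton, ?_⟩
    rw [← Submodule.span_range_eq_iSup]
    exact b.span_eq

private lemma frame_basis [FiniteDimensional k E] {r : ℕ} {L : Fin r → Submodule k E}
    (hL : IsFrame L) : ∃ b : Module.Basis (Fin r) k E, ∀ i, L i = Submodule.span k {b i} := by
  have hx : ∀ i, ∃ x : E, x ∈ L i ∧ x ≠ 0 := fun i =>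
    Submodule.exists_mem_ne_zero_of_ne_bot (by
      intro h
      have h1 := hL.1 i
      rw [h] at h1
      simp at h1)
  choose x hxm hx0 using hx
  have hspan : ∀ i, L i = Submodule.span k {x i} := fun i => by
    refine (Submodule.eq_of_le_of_finrank_le
      (Submodule.span_le.mpr (by simpa using hxm i)) ?_).symm
    rw [hL.1 i, finrank_span_singleton (hx0 i)]
  have hbL : (fun i => Submodule.span k {x i}) = L := funext fun i => (hspan i).symm
  have hli : LinearIndependent k x :=
    (iSupIndep_iff_linearIndependent_of_ne_zero hx0).mp
      (by rw [show (fun i => (Submodule.span k {x i} : Submodule k E)) = L from hbL]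
          exact hL.2.submodule_iSupIndep)
  have htop : ⊤ ≤ Submodule.span k (Set.range x) := by
    rw [Submodule.span_range_eq_iSup]
    simp_rw [← hspan]
    exact hL.2.submodule_iSup_eq_top.ge
  exact ⟨Module.Basis.mk hli htop, fun i => by rw [hspan i, Module.Basis.coe_mk]⟩

private lemma inf'_equiv {α : Type*} (t : Finset α) (hne : t.Nonempty) (f : α → ℚ)
    (hm : 0 < t.card) :
    t.inf' hne f = Finset.univ.inf' ⟨⟨0, hm⟩, Finset.mem_univ _⟩
      (fun i : Fin t.card => f (t.equivFin.symm i)) := by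
  apply le_antisymm
  · exact Finset.le_inf' _ _ fun i _ => Finset.inf'_le f (t.equivFin.symm i).2
  · refine Finset.le_inf' _ _ fun p hp => ?_
    have h := Finset.inf'_le (fun i : Fin t.card => f (t.equivFin.symm i))
      (Finset.mem_univ (t.equivFin ⟨p, hp⟩))
    simpa using h

end Helpers

/-- If the frame `L` is adapted to `v` and `L'` is adapted to `v'`, then the
tensor product frame `L ⊗ L'` is a frame of `E ⊗ E'` adapted to the tensor
product prevaluation `T = v ⊗ v'`; moreover `T` is the unique prevaluation
adapted to `L ⊗ L'` with `T (x ⊗ y) = v x + v' y` for nonzero `x ∈ L i`,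
`y ∈ L' j`. -/
theorem stmt13 {k E E' : Type*} [Field k] [AddCommGroup E] [Module k E]
    [AddCommGroup E'] [Module k E'] [FiniteDimensional k E] [FiniteDimensional k E']
    (v : E → ℚ) (v' : E' → ℚ) (hv : IsPrevaluation k v) (hv' : IsPrevaluation k v')
    {r s : ℕ} (L : Fin r → Submodule k E) (L' : Fin s → Submodule k E')
    (hL : IsFrame L) (hL' : IsFrame L')
    (hvL : AdaptedFrame v L) (hv'L' : AdaptedFrame v' L')
    (T : E ⊗[k] E' → ℚ)
    (hT : ∀ w : E ⊗[k] E', w ≠ 0 → IsGreatest (tensorVals k v v' w) (T w)) :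
    IsFrame (tensorFrame L L') ∧
    AdaptedFrame T (tensorFrame L L') ∧
    (∀ (i : Fin r) (j : Fin s) (x : E) (y : E'), x ∈ L i → y ∈ L' j →
        x ≠ 0 → y ≠ 0 → T (x ⊗ₜ[k] y) = v x + v' y) ∧
    (∀ T' : E ⊗[k] E' → ℚ, IsPrevaluation k T' → AdaptedFrame T' (tensorFrame L L') →
        (∀ (i : Fin r) (j : Fin s) (x : E) (y : E'), x ∈ L i → y ∈ L' j →
            x ≠ 0 → y ≠ 0 → T' (x ⊗ₜ[k] y) = v x + v' y) →
        ∀ w : E ⊗[k] E', w ≠ 0 → T' w = T w) := by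
  classical
  obtain ⟨b, hb⟩ := frame_basis hL
  obtain ⟨b', hb'⟩ := frame_basis hL'
  set B : Module.Basis (Fin r × Fin s) k (E ⊗[k] E') := Module.Basis.tensorProduct b b' with hB
  set u : Fin r × Fin s → ℚ := fun p => v (b p.1) + v' (b' p.2) with hu
  have hvb : AdaptedFrame v (fun i => Submodule.span k {b i}) := by
    rw [show (fun i => (Submodule.span k {b i} : Submodule k E)) = L from
      funext fun i => (hb i).symm]
    exact hvL
  have hv'b : AdaptedFrame v' (fun j => Submodule.span k {b' j}) := by
    rw [show (fun j => (Submodule.span k {b' j} : Submodule k E')) = L' from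
      funext fun j => (hb' j).symm]
    exact hv'L'
  have hframe_eq : tensorFrame L L' = fun p => Submodule.span k {B p} := by
    funext p
    apply le_antisymm
    · rw [tensorFrame, Submodule.span_le]
      rintro w ⟨x, hx, y, hy, rfl⟩
      rw [hb p.1, Submodule.mem_span_singleton] at hx
      rw [hb' p.2, Submodule.mem_span_singleton] at hy
      obtain ⟨c, rfl⟩ := hx
      obtain ⟨d, rfl⟩ := hy
      rw [SetLike.mem_coe, Submodule.mem_span_singleton]
      refine ⟨c * d, ?_⟩
      rw [hB, Module.Basis.tensorProduct_apply', TensorProduct.smul_tmul_smul]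
    · rw [Submodule.span_le, Set.singleton_subset_iff]
      refine Submodule.subset_span ⟨b p.1, ?_, b' p.2, ?_, ?_⟩
      · rw [hb p.1]; exact Submodule.mem_span_singleton_self _
      · rw [hb' p.2]; exact Submodule.mem_span_singleton_self _
      · rw [hB, Module.Basis.tensorProduct_apply']
  -- membership of the candidate value in tensorVals
  have hM_mem : ∀ (w : E ⊗[k] E') (hne : (B.repr w).support.Nonempty),
      (B.repr w).support.inf' hne u ∈ tensorVals k v v' w := by
    intro w hne
    set t : Finset (Fin r × Fin s) := (B.repr w).support with htdef
    have hm : 0 < t.card := Finset.card_pos.mpr hne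
    refine ⟨t.card, hm,
      fun i => B.repr w ((t.equivFin.symm i : t) : Fin r × Fin s) •
        b ((t.equivFin.symm i : t) : Fin r × Fin s).1,
      fun i => b' ((t.equivFin.symm i : t) : Fin r × Fin s).2, ?_, ?_, ?_, ?_⟩
    · intro i
      exact smul_ne_zero (Finsupp.mem_support_iff.mp (t.equivFin.symm i).2) (b.ne_zero _)
    · intro i
      exact b'.ne_zero _
    · have hterm : ∀ p : Fin r × Fin s,
          (B.repr w p • b p.1) ⊗ₜ[k] b' p.2 = B.repr w p • B p := by
        intro p
        rw [hB, Module.Basis.tensorProduct_apply', TensorProduct.smul_tmul']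
      calc w = ∑ p, B.repr w p • B p := (B.sum_repr w).symm
        _ = ∑ p ∈ t, B.repr w p • B p := by
            refine (Finset.sum_subset (Finset.subset_univ t) ?_).symm
            intro p _ hp
            rw [Finsupp.notMem_support_iff.mp hp, zero_smul]
        _ = ∑ p : t, B.repr w (↑p) • B (↑p) := (Finset.sum_coe_sort t _).symm
        _ = ∑ i : Fin t.card, B.repr w ((t.equivFin.symm i : t) : Fin r × Fin s) •
              B ((t.equivFin.symm i : t) : Fin r × Fin s) :=
            (Equiv.sum_comp t.equivFin.symm _).symm
        _ = _ := by
            refine Finset.sum_congr rfl fun i _ => ?_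
            rw [hterm]
    · rw [inf'_equiv t hne u hm]
      refine Finset.inf'_congr _ rfl fun i _ => ?_
      rw [hu]
      have hc : B.repr w ((t.equivFin.symm i : t) : Fin r × Fin s) ≠ 0 :=
        Finsupp.mem_support_iff.mp (t.equivFin.symm i).2
      rw [hv.1 _ _ hc (b.ne_zero _)]
  -- upper bound for tensorVals
  have hub : ∀ (w : E ⊗[k] E'), ∀ q ∈ tensorVals k v v' w,
      ∀ p ∈ (B.repr w).support, q ≤ u p := by
    rintro w q ⟨m, hm, e, e', he, he', rfl, rfl⟩ p hp
    have hrepr : B.repr (∑ i, e i ⊗ₜ[k] e' i) p = ∑ i, B.repr (e i ⊗ₜ[k] e' i) p := by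
      rw [map_sum, Finsupp.finset_sum_apply]
    have hex : ∃ i : Fin m, B.repr (e i ⊗ₜ[k] e' i) p ≠ 0 := by
      by_contra h
      push_neg at h
      apply Finsupp.mem_support_iff.mp hp
      rw [hrepr]
      exact Finset.sum_eq_zero fun i _ => h i
    obtain ⟨i, hi⟩ := hex
    have h1 : b.repr (e i) p.1 ≠ 0 ∧ b'.repr (e' i) p.2 ≠ 0 := by
      rw [show p = (p.1, p.2) from rfl, hB, Module.Basis.tensorProduct_repr_tmul_apply] at hi
      constructor
      · intro h0; apply hi; rw [h0]; simp
      · intro h0; apply hi; rw [h0]; simp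
    have he0 : e i ≠ 0 := he i
    have he'0 : e' i ≠ 0 := he' i
    calc Finset.univ.inf' ⟨⟨0, hm⟩, Finset.mem_univ _⟩ (fun i => v (e i) + v' (e' i))
        ≤ v (e i) + v' (e' i) := Finset.inf'_le _ (Finset.mem_univ i)
      _ ≤ u p := add_le_add (adapted_le b hvb he0 h1.1) (adapted_le b' hv'b he'0 h1.2)
  -- formula for T
  have hrepr_ne : ∀ w : E ⊗[k] E', w ≠ 0 → (B.repr w).support.Nonempty := by
    intro w hw
    exact Finsupp.support_nonempty_iff.mpr
      (fun h => hw (by simpa using congrArg B.repr.symm h))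
  have hTw : ∀ (w : E ⊗[k] E') (hne : (B.repr w).support.Nonempty),
      T w = (B.repr w).support.inf' hne u := by
    intro w hne
    have hw0 : w ≠ 0 := by
      intro h
      rw [h] at hne
      simp at hne
    have hg := hT w hw0
    exact le_antisymm (Finset.le_inf' _ _ fun p hp => hub w (T w) hg.1 p hp)
      (hg.2 (hM_mem w hne))
  -- pure tensor values
  have hpure : ∀ (i : Fin r) (j : Fin s) (x : E) (y : E'), x ∈ L i → y ∈ L' j →
      x ≠ 0 → y ≠ 0 → T (x ⊗ₜ[k] y) = v x + v' y := by
    intro i j x y hx hy hx0 hy0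
    rw [hb i, Submodule.mem_span_singleton] at hx
    rw [hb' j, Submodule.mem_span_singleton] at hy
    obtain ⟨c, rfl⟩ := hx
    obtain ⟨d, rfl⟩ := hy
    have hc : c ≠ 0 := fun h => hx0 (by rw [h, zero_smul])
    have hd : d ≠ 0 := fun h => hy0 (by rw [h, zero_smul])
    have htens : (c • b i) ⊗ₜ[k] (d • b' j) = (c * d) • B (i, j) := by
      rw [hB, Module.Basis.tensorProduct_apply, TensorProduct.smul_tmul_smul]
    have hreprcd : B.repr ((c • b i) ⊗ₜ[k] (d • b' j)) = Finsupp.single (i, j) (c * d) := by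
      rw [htens, map_smul, B.repr_self, Finsupp.smul_single, smul_eq_mul, mul_one]
    have hsupp : (B.repr ((c • b i) ⊗ₜ[k] (d • b' j))).support = {(i, j)} := by
      rw [hreprcd]
      exact Finsupp.support_single_ne_zero _ (mul_ne_zero hc hd)
    have hne : (B.repr ((c • b i) ⊗ₜ[k] (d • b' j))).support.Nonempty := by
      rw [hsupp]; exact Finset.singleton_nonempty _
    rw [hTw _ hne]
    have hval : (B.repr ((c • b i) ⊗ₜ[k] (d • b' j))).support.inf' hne u = u (i, j) := by
      apply le_antisymm
      · exact Finset.inf'_le _ (by rw [hsupp]; exact Finset.mem_singleton_self _)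
      · refine Finset.le_inf' _ _ fun p hp => ?_
        rw [hsupp, Finset.mem_singleton] at hp
        rw [hp]
    rw [hval, hu, hv.1 c _ hc (b.ne_zero i), hv'.1 d _ hd (b'.ne_zero j)]
  refine ⟨?_, ?_, hpure, ?_⟩
  · rw [hframe_eq]
    exact isFrame_of_basis B
  · rw [hframe_eq]
    exact adapted_of_inf B u T hTw
  · intro T' hT'p hT'a hT'val w hw
    have hT'a2 : AdaptedFrame T' (fun p => Submodule.span k {B p}) := by
      rw [← hframe_eq]; exact hT'a
    have hne := hrepr_ne w hw
    rw [adapted_eq_inf B hT'a2 hw hne, hTw w hne]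
    refine Finset.inf'_congr _ rfl fun p hp => ?_
    rw [hB, Module.Basis.tensorProduct_apply']
    rw [hT'val p.1 p.2 (b p.1) (b' p.2)
      (by rw [hb p.1]; exact Submodule.mem_span_singleton_self _)
      (by rw [hb' p.2]; exact Submodule.mem_span_singleton_self _)
      (b.ne_zero _) (b'.ne_zero _)]
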